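/- Let B be the (k+1)×k matrix whose columns are the vectors f_1,…,f_k with (f_j)_i = 1/√(k²+k) for i ≠ j and (f_j)_j = −k/√(k²+k). Then det(BᵀB) = (k+1)^{k-1}/k^k. -/

import Mathlib

open Matrix BigOperators

/-- The Gram determinant of the basis matrix B is (k+1)^{k-1}/k^k. -/
theorem stmt9 (k : ℕ) (hk : 2 ≤ k)
    (B : Matrix (Fin (k + 1)) (Fin k) ℝ)
    (hB : ∀ i j, B i j = if i = Fin.castSucc j
        then -(k : ℝ) / Real.sqrt ((k : ℝ) ^ 2 + k)
        else 1 / Real.sqrt ((k : ℝ) ^ 2 + k)) :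
    (Bᵀ * B).det = ((k : ℝ) + 1) ^ (k - 1) / (k : ℝ) ^ k := by
  have hkR : (0:ℝ) < (k:ℝ) := by exact_mod_cast (by omega : 0 < k)
  set s : ℝ := Real.sqrt ((k : ℝ) ^ 2 + k) with hsdef
  have hs2 : s ^ 2 = (k:ℝ)^2 + k := Real.sq_sqrt (by positivity)
  have hsne : s ≠ 0 := by
    intro h
    rw [h] at hs2
    simp at hs2
    nlinarith
  have hk1 : ((k:ℝ) + 1) ≠ 0 := by positivity
  have hkne : (k:ℝ) ≠ 0 := ne_of_gt hkR
  have hsum1 : ∀ (a : Fin (k+1)) (X C : ℝ),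
      (∑ i : Fin (k+1), (if i = a then X else C)) = X + (k:ℝ) * C := by
    intro a X C
    have h : ∀ i : Fin (k+1), (if i = a then X else C)
        = C + (if i = a then X - C else (0:ℝ)) := by
      intro i; split <;> ring
    simp only [h, Finset.sum_add_distrib, Finset.sum_const, Finset.card_univ,
      Fintype.card_fin, nsmul_eq_mul, Finset.sum_ite_eq', Finset.mem_univ, if_true]
    push_cast; ring
  set X : ℝ := -(k:ℝ)/s with hX
  set C : ℝ := 1/s with hC
  have hk2 : ((k:ℝ)^2 + k) ≠ 0 := by positivity
  have hss : s * s = (k:ℝ)^2 + k := by rw [← hs2]; ring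
  have hCC : C * C = 1 / ((k:ℝ)^2 + k) := by
    rw [hC, div_mul_div_comm, one_mul, hss]
  have hXX : X * X = (k:ℝ)^2 / ((k:ℝ)^2 + k) := by
    rw [hX, div_mul_div_comm, hss]; ring_nf
  have hXC : X * C = -(k:ℝ) / ((k:ℝ)^2 + k) := by
    rw [hX, hC, div_mul_div_comm, hss]; ring_nf
  have hCX : C * X = -(k:ℝ) / ((k:ℝ)^2 + k) := by rw [mul_comm]; exact hXC
  set r : ℝ := -(1/((k:ℝ)+1)) with hr
  set a : ℝ := ((k:ℝ)+1)/k with ha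
  have key : Bᵀ * B = a • (1 + r • (replicateCol Unit (fun _ : Fin k => (1:ℝ)) *
      replicateRow Unit (fun _ : Fin k => (1:ℝ)))) := by
    ext j j'
    have hlhs : (Bᵀ * B) j j' = ∑ i : Fin (k+1),
        (if i = Fin.castSucc j then X else C) * (if i = Fin.castSucc j' then X else C) := by
      simp [Matrix.mul_apply, hB]
    rw [hlhs]
    have hrhs : ((a • (1 + r • (replicateCol Unit (fun _ : Fin k => (1:ℝ)) *
        replicateRow Unit (fun _ : Fin k => (1:ℝ))))) : Matrix (Fin k) (Fin k) ℝ) j j'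
        = a * ((if j = j' then (1:ℝ) else 0) + r) := by
      simp [Matrix.mul_apply, Matrix.one_apply]
    rw [hrhs]
    by_cases hjj : j = j'
    · subst hjj
      have h1 : ∀ i : Fin (k+1),
          (if i = Fin.castSucc j then X else C) * (if i = Fin.castSucc j then X else C)
          = (if i = Fin.castSucc j then X*X else C*C) := by
        intro i; split <;> ring
      simp only [h1, hsum1, if_pos rfl]
      rw [hXX, hCC, ha, hr]
      field_simp
      rw [if_pos trivial]; ring
    · have hab : Fin.castSucc j ≠ Fin.castSucc j' := by
        simpa [Fin.castSucc_inj] using hjj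
      have h1 : ∀ i : Fin (k+1),
          (if i = Fin.castSucc j then X else C) * (if i = Fin.castSucc j' then X else C)
          = C*C + (if i = Fin.castSucc j then X*C - C*C else 0)
              + (if i = Fin.castSucc j' then C*X - C*C else 0) := by
        intro i
        by_cases h1 : i = Fin.castSucc j <;> by_cases h2 : i = Fin.castSucc j'
        · exact absurd (h1 ▸ h2) hab
        · subst h1
          simp only [eq_self_iff_true, if_true, ite_true, if_neg hab]; ring
        · subst h2
          simp only [eq_self_iff_true, if_true, ite_true, if_neg (Ne.symm hab)]; ring
        · simp only [if_neg h1, if_neg h2]; ring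
      simp only [h1, Finset.sum_add_distrib, Finset.sum_const, Finset.card_univ,
        Fintype.card_fin, nsmul_eq_mul, Finset.sum_ite_eq', Finset.mem_univ, if_true,
        if_neg hjj]
      push_cast
      rw [hXC, hCX, hCC, ha, hr]
      field_simp
      ring
  rw [key, Matrix.det_smul, Fintype.card_fin]
  have hcol : r • (replicateCol Unit (fun _ : Fin k => (1:ℝ)) * replicateRow Unit (fun _ : Fin k => (1:ℝ)))
      = replicateCol Unit (r • (fun _ : Fin k => (1:ℝ))) * replicateRow Unit (fun _ : Fin k => (1:ℝ)) := by
    rw [Matrix.replicateCol_smul, Matrix.smul_mul]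
  rw [hcol, Matrix.det_one_add_replicateCol_mul_replicateRow]
  have hdot : (fun _ : Fin k => (1:ℝ)) ⬝ᵥ (r • fun _ : Fin k => (1:ℝ)) = (k:ℝ) * r := by
    simp [dotProduct, Finset.sum_const, mul_comm]
  rw [hdot, ha, hr]
  rw [div_pow]
  have hkk : ((k:ℝ)+1)^k = ((k:ℝ)+1)^(k-1) * ((k:ℝ)+1) := by
    rw [← pow_succ]; congr 1; omega
  rw [hkk]
  field_simp
  ring
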